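/- Let r ≤ 1 be an integer coprime with 3. Then the exact identity Σ_{k=0}^{1-r} ((r-1)_k (r/3)_k³)/((1)_k (2r/3)_k³) · ( Σ_{j=0}^{k-1} 1/(2r/3+j) - Σ_{j=0}^{k-1} 1/(r/3+j) ) = ( Σ_{j=0}^{-r} 1/(2r/3+j) ) · Σ_{k=0}^{1-r} ((r-1)_k (r/3)_k³)/((1)_k (2r/3)_k³) holds in ℚ. -/

import Mathlib

open Finset

private lemma asc_eval_prod (x : ℚ) (m : ℕ) :
    (ascPochhammer ℚ m).eval x = ∏ j ∈ Finset.range m, (x + (j : ℚ)) := by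
  induction m with
  | zero => simp
  | succ m ih => rw [ascPochhammer_succ_eval, ih, Finset.prod_range_succ]

private lemma cast_refl_index (n k j : ℕ) (hk : k ≤ n) (hj : j < n - k) :
    ((n - k - 1 - j : ℕ) : ℚ) = (n : ℚ) - ((k + j : ℕ) : ℚ) - 1 := by
  have h' : (n - k - 1 - j) + (k + j + 1) = n := by omega
  have := congrArg (fun m : ℕ => (m : ℚ)) h'
  push_cast at this ⊢
  linarith

/-- Reflection of a finite product. -/
private lemma refl_prod (a b : ℚ) (n k : ℕ) (hk : k ≤ n) (hab : a + b = 1 - (n : ℚ)) :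
    (∏ j ∈ Finset.range (n - k), (a + (j : ℚ))) * ∏ j ∈ Finset.range k, (b + (j : ℚ))
      = (-1) ^ (n - k) * ∏ j ∈ Finset.range n, (b + (j : ℚ)) := by
  have h1 : (∏ j ∈ Finset.range (n - k), (a + (j : ℚ)))
      = ∏ j ∈ Finset.range (n - k), ((-1) * (b + ((k + j : ℕ) : ℚ))) := by
    rw [← Finset.prod_range_reflect]
    refine Finset.prod_congr rfl fun j hj => ?_
    rw [cast_refl_index n k j hk (Finset.mem_range.mp hj)]
    push_cast
    linarith
  rw [h1, Finset.prod_mul_distrib, Finset.prod_const, Finset.card_range]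
  have h2 : (∏ j ∈ Finset.range k, (b + (j : ℚ))) *
      ∏ j ∈ Finset.range (n - k), (b + ((k + j : ℕ) : ℚ)) =
      ∏ j ∈ Finset.range n, (b + (j : ℚ)) := by
    rw [← Finset.prod_range_add, Nat.add_sub_cancel' hk]
  calc (-1 : ℚ) ^ (n - k) * (∏ j ∈ Finset.range (n - k), (b + ((k + j : ℕ) : ℚ))) *
        ∏ j ∈ Finset.range k, (b + (j : ℚ))
      = (-1) ^ (n - k) * ((∏ j ∈ Finset.range k, (b + (j : ℚ))) *
        ∏ j ∈ Finset.range (n - k), (b + ((k + j : ℕ) : ℚ))) := by ring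
    _ = _ := by rw [h2]

/-- Reflection of a harmonic-type sum. -/
private lemma refl_sum (a b : ℚ) (n k : ℕ) (hk : k ≤ n) (hab : a + b = 1 - (n : ℚ)) :
    ∑ j ∈ Finset.range (n - k), 1 / (a + (j : ℚ))
      = (∑ j ∈ Finset.range k, 1 / (b + (j : ℚ))) - ∑ j ∈ Finset.range n, 1 / (b + (j : ℚ)) := by
  have h1 : (∑ j ∈ Finset.range (n - k), 1 / (a + (j : ℚ)))
      = ∑ j ∈ Finset.range (n - k), (-(1 / (b + ((k + j : ℕ) : ℚ)))) := by
    rw [← Finset.sum_range_reflect]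
    refine Finset.sum_congr rfl fun j hj => ?_
    have he : a + ((n - k - 1 - j : ℕ) : ℚ) = -(b + ((k + j : ℕ) : ℚ)) := by
      rw [cast_refl_index n k j hk (Finset.mem_range.mp hj)]
      push_cast
      linarith
    rw [he, one_div, one_div, neg_inv]
  have h2 : (∑ j ∈ Finset.range k, 1 / (b + (j : ℚ))) +
      ∑ j ∈ Finset.range (n - k), 1 / (b + ((k + j : ℕ) : ℚ)) =
      ∑ j ∈ Finset.range n, 1 / (b + (j : ℚ)) := by
    rw [← Finset.sum_range_add, Nat.add_sub_cancel' hk]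
  rw [h1, Finset.sum_neg_distrib]
  linarith

private lemma sq_neg_one_pow (m : ℕ) : ((-1 : ℚ) ^ m) ^ 2 = 1 := by
  rw [← pow_mul, mul_comm, pow_mul]
  norm_num

private lemma sign4 (m : ℕ) (x y : ℚ) :
    ((-1 : ℚ) ^ m * x) * ((-1 : ℚ) ^ m * y) ^ 3 = x * y ^ 3 := by
  have h := sq_neg_one_pow m
  calc ((-1 : ℚ) ^ m * x) * ((-1 : ℚ) ^ m * y) ^ 3
      = (((-1 : ℚ) ^ m) ^ 2) ^ 2 * (x * y ^ 3) := by ring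
    _ = x * y ^ 3 := by rw [h]; ring

private lemma sign_mix (n k : ℕ) (hk : k ≤ n) (x y : ℚ) :
    ((-1 : ℚ) ^ k * x) * ((-1 : ℚ) ^ (n - k) * ((-1 : ℚ) ^ n * y)) ^ 3 = x * y ^ 3 := by
  have hsg : (-1 : ℚ) ^ (n - k) * (-1 : ℚ) ^ k = (-1 : ℚ) ^ n := by
    rw [← pow_add]
    congr 1
    omega
  have h1 := sq_neg_one_pow (n - k)
  have h2 := sq_neg_one_pow n
  calc ((-1 : ℚ) ^ k * x) * ((-1 : ℚ) ^ (n - k) * ((-1 : ℚ) ^ n * y)) ^ 3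
      = ((-1 : ℚ) ^ (n - k) * (-1 : ℚ) ^ k) * (-1 : ℚ) ^ n *
          ((((-1 : ℚ) ^ (n - k)) ^ 2) * (((-1 : ℚ) ^ n) ^ 2) * (x * y ^ 3)) := by ring
    _ = ((-1 : ℚ) ^ n * (-1 : ℚ) ^ n) * (x * y ^ 3) := by rw [hsg, h1, h2]; ring
    _ = (((-1 : ℚ) ^ n) ^ 2) * (x * y ^ 3) := by ring
    _ = x * y ^ 3 := by rw [h2]; ring

/-- Generic symmetrization. -/
private lemma sym_sum (T H : ℕ → ℚ) (n : ℕ) (C : ℚ)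
    (hT : ∀ k ≤ n, T (n - k) = T k) (hH : ∀ k ≤ n, H (n - k) = 2 * C - H k) :
    ∑ k ∈ Finset.range (n + 1), T k * H k = C * ∑ k ∈ Finset.range (n + 1), T k := by
  have h1 : ∑ k ∈ Finset.range (n + 1), T k * H k
      = ∑ k ∈ Finset.range (n + 1), T (n - k) * H (n - k) := by
    have := Finset.sum_range_reflect (fun k => T k * H k) (n + 1)
    simpa using this.symm
  have h2 : ∑ k ∈ Finset.range (n + 1), T (n - k) * H (n - k)
      = ∑ k ∈ Finset.range (n + 1), (2 * C * T k - T k * H k) := by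
    refine Finset.sum_congr rfl fun k hk => ?_
    have hkn : k ≤ n := Nat.lt_succ_iff.mp (Finset.mem_range.mp hk)
    rw [hT k hkn, hH k hkn]; ring
  rw [Finset.sum_sub_distrib, ← Finset.mul_sum] at h2
  have := h1.trans h2
  linarith

private lemma key (a b : ℚ) (n : ℕ) (hab : a + b = 1 - (n : ℚ))
    (ha : ∀ i : ℕ, a + (i : ℚ) ≠ 0) (hb : ∀ i : ℕ, b + (i : ℚ) ≠ 0) :
    ∑ k ∈ Finset.range (n + 1),
        (∏ j ∈ Finset.range k, (a + b - 1 + (j : ℚ))) * (∏ j ∈ Finset.range k, (a + (j : ℚ))) ^ 3 /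
            ((∏ j ∈ Finset.range k, (1 + (j : ℚ))) * (∏ j ∈ Finset.range k, (b + (j : ℚ))) ^ 3) *
          ((∑ j ∈ Finset.range k, 1 / (b + (j : ℚ))) - ∑ j ∈ Finset.range k, 1 / (a + (j : ℚ)))
      = (∑ j ∈ Finset.range n, 1 / (b + (j : ℚ))) *
          ∑ k ∈ Finset.range (n + 1),
            (∏ j ∈ Finset.range k, (a + b - 1 + (j : ℚ))) * (∏ j ∈ Finset.range k, (a + (j : ℚ))) ^ 3 /
              ((∏ j ∈ Finset.range k, (1 + (j : ℚ))) * (∏ j ∈ Finset.range k, (b + (j : ℚ))) ^ 3) := by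
  set T : ℕ → ℚ := fun k =>
    (∏ j ∈ Finset.range k, (a + b - 1 + (j : ℚ))) * (∏ j ∈ Finset.range k, (a + (j : ℚ))) ^ 3 /
      ((∏ j ∈ Finset.range k, (1 + (j : ℚ))) * (∏ j ∈ Finset.range k, (b + (j : ℚ))) ^ 3) with hTdef
  set H : ℕ → ℚ := fun k =>
    (∑ j ∈ Finset.range k, 1 / (b + (j : ℚ))) - ∑ j ∈ Finset.range k, 1 / (a + (j : ℚ)) with hHdef
  have hone : ∀ i : ℕ, (1 : ℚ) + (i : ℚ) ≠ 0 := fun i => by positivity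
  have hc1 : (a + b - 1) + 1 = 1 - (n : ℚ) := by linarith
  have hba : b + a = 1 - (n : ℚ) := by linarith
  have hPb : ∀ m, (∏ j ∈ Finset.range m, (b + (j : ℚ))) ≠ 0 :=
    fun m => Finset.prod_ne_zero_iff.mpr fun j _ => hb j
  have hF : ∀ m, (∏ j ∈ Finset.range m, ((1 : ℚ) + (j : ℚ))) ≠ 0 :=
    fun m => Finset.prod_ne_zero_iff.mpr fun j _ => hone j
  have hT : ∀ k ≤ n, T (n - k) = T k := by
    intro k hk
    have e1 := refl_prod a b n k hk hab
    have e2 := refl_prod b a n k hk hba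
    have e3 := refl_prod (a + b - 1) 1 n k hk hc1
    have e4' := refl_prod (a + b - 1) 1 n (n - k) (Nat.sub_le n k) hc1
    rw [Nat.sub_sub_self hk] at e4'
    have e5 := refl_prod a b n 0 (Nat.zero_le n) hab
    rw [Nat.sub_zero] at e5
    simp only [Finset.range_zero, Finset.prod_empty, mul_one] at e5
    simp only [hTdef]
    rw [div_eq_div_iff (mul_ne_zero (hF _) (pow_ne_zero 3 (hPb _)))
        (mul_ne_zero (hF _) (pow_ne_zero 3 (hPb _)))]
    calc (∏ j ∈ Finset.range (n - k), (a + b - 1 + (j : ℚ))) *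
            (∏ j ∈ Finset.range (n - k), (a + (j : ℚ))) ^ 3 *
            ((∏ j ∈ Finset.range k, ((1 : ℚ) + (j : ℚ))) *
              (∏ j ∈ Finset.range k, (b + (j : ℚ))) ^ 3)
        = ((∏ j ∈ Finset.range (n - k), (a + b - 1 + (j : ℚ))) *
            ∏ j ∈ Finset.range k, ((1 : ℚ) + (j : ℚ))) *
            ((∏ j ∈ Finset.range (n - k), (a + (j : ℚ))) *
              ∏ j ∈ Finset.range k, (b + (j : ℚ))) ^ 3 := by ring
      _ = ((-1) ^ (n - k) * ∏ j ∈ Finset.range n, ((1 : ℚ) + (j : ℚ))) *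
            ((-1) ^ (n - k) * ∏ j ∈ Finset.range n, (b + (j : ℚ))) ^ 3 := by rw [e3, e1]
      _ = (∏ j ∈ Finset.range n, ((1 : ℚ) + (j : ℚ))) *
            (∏ j ∈ Finset.range n, (b + (j : ℚ))) ^ 3 := sign4 _ _ _
      _ = ((-1) ^ k * ∏ j ∈ Finset.range n, ((1 : ℚ) + (j : ℚ))) *
            ((-1) ^ (n - k) * ((-1) ^ n * ∏ j ∈ Finset.range n, (b + (j : ℚ)))) ^ 3 :=
          (sign_mix n k hk _ _).symm
      _ = ((-1) ^ k * ∏ j ∈ Finset.range n, ((1 : ℚ) + (j : ℚ))) *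
            ((-1) ^ (n - k) * ∏ j ∈ Finset.range n, (a + (j : ℚ))) ^ 3 := by rw [e5]
      _ = ((∏ j ∈ Finset.range k, (a + b - 1 + (j : ℚ))) *
            ∏ j ∈ Finset.range (n - k), ((1 : ℚ) + (j : ℚ))) *
            ((∏ j ∈ Finset.range (n - k), (b + (j : ℚ))) *
              ∏ j ∈ Finset.range k, (a + (j : ℚ))) ^ 3 := by rw [e4', e2]
      _ = (∏ j ∈ Finset.range k, (a + b - 1 + (j : ℚ))) *
            (∏ j ∈ Finset.range k, (a + (j : ℚ))) ^ 3 *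
            ((∏ j ∈ Finset.range (n - k), ((1 : ℚ) + (j : ℚ))) *
              (∏ j ∈ Finset.range (n - k), (b + (j : ℚ))) ^ 3) := by ring
  have hH : ∀ k ≤ n, H (n - k) = 2 * (∑ j ∈ Finset.range n, 1 / (b + (j : ℚ))) - H k := by
    intro k hk
    have e1 := refl_sum a b n k hk hab
    have e2 := refl_sum b a n k hk hba
    have e4 := refl_sum b a n 0 (Nat.zero_le n) hba
    rw [Nat.sub_zero] at e4
    simp only [Finset.range_zero, Finset.sum_empty, zero_sub] at e4
    simp only [hHdef]
    rw [e1, e2, e4]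
    ring
  exact sym_sum T H n _ hT hH

/-- Lemma 2.6: For an integer `r ≤ 1` coprime with `3`, the exact identity
`Σ_{k=0}^{1-r} (r-1)_k (r/3)_k³/((1)_k (2r/3)_k³) (Σ_{j=0}^{k-1} 1/(2r/3+j) - Σ_{j=0}^{k-1} 1/(r/3+j))
 = (Σ_{j=0}^{-r} 1/(2r/3+j)) Σ_{k=0}^{1-r} (r-1)_k (r/3)_k³/((1)_k (2r/3)_k³)` holds in `ℚ`. -/
theorem stmt4 (r : ℤ) (hr : r ≤ 1) (hr3 : IsCoprime r 3) :
    ∑ k ∈ Finset.range ((1 - r).toNat + 1),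
        (ascPochhammer ℚ k).eval ((r : ℚ) - 1) * ((ascPochhammer ℚ k).eval ((r : ℚ) / 3)) ^ 3 /
            ((ascPochhammer ℚ k).eval 1 * ((ascPochhammer ℚ k).eval (2 * (r : ℚ) / 3)) ^ 3) *
          ((∑ j ∈ Finset.range k, 1 / (2 * (r : ℚ) / 3 + (j : ℚ))) -
            ∑ j ∈ Finset.range k, 1 / ((r : ℚ) / 3 + (j : ℚ))) =
      (∑ j ∈ Finset.range ((1 - r).toNat), 1 / (2 * (r : ℚ) / 3 + (j : ℚ))) *
        ∑ k ∈ Finset.range ((1 - r).toNat + 1),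
          (ascPochhammer ℚ k).eval ((r : ℚ) - 1) * ((ascPochhammer ℚ k).eval ((r : ℚ) / 3)) ^ 3 /
            ((ascPochhammer ℚ k).eval 1 * ((ascPochhammer ℚ k).eval (2 * (r : ℚ) / 3)) ^ 3) := by
  have h3 : ¬ (3 : ℤ) ∣ r := by
    intro hdvd
    have := hr3.isUnit_of_dvd' hdvd dvd_rfl
    rw [Int.isUnit_iff] at this
    omega
  have hn : (((1 - r).toNat : ℤ) : ℚ) = 1 - (r : ℚ) := by
    rw [Int.toNat_of_nonneg (by omega)]; push_cast; ring
  have hnQ : (((1 - r).toNat : ℕ) : ℚ) = 1 - (r : ℚ) := by exact_mod_cast hn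
  have ha : ∀ i : ℕ, (r : ℚ) / 3 + (i : ℚ) ≠ 0 := by
    intro i h
    apply h3
    have h1 : (r : ℚ) = 3 * (-(i : ℚ)) := by
      field_simp at h
      linarith
    have h2 : (r : ℤ) = 3 * (-(i : ℤ)) := by exact_mod_cast h1
    omega
  have hb : ∀ i : ℕ, 2 * (r : ℚ) / 3 + (i : ℚ) ≠ 0 := by
    intro i h
    apply h3
    have h1 : 2 * (r : ℚ) = 3 * (-(i : ℚ)) := by
      field_simp at h
      linarith
    have h2 : 2 * (r : ℤ) = 3 * (-(i : ℤ)) := by exact_mod_cast h1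
    omega
  have hab : (r : ℚ) / 3 + 2 * (r : ℚ) / 3 = 1 - (((1 - r).toNat : ℕ) : ℚ) := by
    rw [hnQ]; ring
  simp only [asc_eval_prod]
  rw [show (r : ℚ) - 1 = (r : ℚ) / 3 + 2 * (r : ℚ) / 3 - 1 from by ring]
  exact key ((r : ℚ) / 3) (2 * (r : ℚ) / 3) ((1 - r).toNat) hab ha hb
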